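/- Let f : ℝ → ℂ be bounded and twice differentiable with bounded second derivative, and define the sequence σ_n = f(√n) for n ∈ ℕ₀. Then σ ∈ d_Δ; that is, σ is bounded and sup_{m∈ℕ₀} m·|σ_{m+2} − 2σ_{m+1} + σ_m| < ∞ (equivalently, sup_{n≥1} n·|σ_{n+1} − 2σ_n + σ_{n−1}| < ∞). -/

import Mathlib

set_option maxHeartbeats 1000000


/-- STATEMENT 16: if `f : ℝ → ℂ` is bounded and twice differentiable with bounded second
derivative, then the sequence `σ_n = f(√n)` belongs to `d_Δ`: it is bounded and
`sup_m m·|σ_{m+2} − 2σ_{m+1} + σ_m| < ∞`. -/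
theorem statement16 (f : ℝ → ℂ) (hfb : ∃ C, ∀ x : ℝ, ‖f x‖ ≤ C)
    (f' f'' : ℝ → ℂ) (hf' : ∀ x : ℝ, HasDerivAt f (f' x) x)
    (hf'' : ∀ x : ℝ, HasDerivAt f' (f'' x) x)
    (hf''b : ∃ C, ∀ x : ℝ, ‖f'' x‖ ≤ C)
    (σ : ℕ → ℂ) (hσ : ∀ k : ℕ, σ k = f (Real.sqrt k)) :
    (∃ C, ∀ k : ℕ, ‖σ k‖ ≤ C)
    ∧ ∃ C, ∀ m : ℕ, (m : ℝ) * ‖σ (m + 2) - 2 * σ (m + 1) + σ m‖ ≤ C := by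
  obtain ⟨Cf, hCf⟩ := hfb
  obtain ⟨B, hB⟩ := hf''b
  have hB0 : 0 ≤ B := le_trans (norm_nonneg _) (hB 0)
  set A := ‖f' 0‖ with hA
  have hA0 : 0 ≤ A := norm_nonneg _
  -- f' is B-Lipschitz
  have hlip : ∀ x y : ℝ, ‖f' y - f' x‖ ≤ B * |y - x| := by
    intro x y
    have := Convex.norm_image_sub_le_of_norm_hasDerivWithin_le
      (f := f') (f' := f'') (s := Set.univ)
      (fun z _ => (hf'' z).hasDerivWithinAt) (fun z _ => hB z) convex_univ
      (Set.mem_univ x) (Set.mem_univ y)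
    simpa [Real.norm_eq_abs] using this
  -- f' has linear growth
  have hf'bound : ∀ x : ℝ, ‖f' x‖ ≤ A + B * |x| := by
    intro x
    have h1 := hlip 0 x
    have h2 : ‖f' x‖ - ‖f' 0‖ ≤ ‖f' x - f' 0‖ := norm_sub_norm_le _ _
    simp only [sub_zero] at h1
    linarith
  -- first order Taylor estimate
  have taylor : ∀ x y : ℝ, ‖f y - f x - (y - x) • f' x‖ ≤ B * (y - x) ^ 2 := by
    intro x y
    set g : ℝ → ℂ := fun z => f z - f x - (z - x) • f' x with hg
    have hg' : ∀ z : ℝ, HasDerivAt g (f' z - f' x) z := by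
      intro z
      have h1 : HasDerivAt (fun z : ℝ => (z - x) • f' x) (f' x) z := by
        simpa using ((hasDerivAt_id z).sub_const x).smul_const (f' x)
      exact ((hf' z).sub_const (f x)).sub h1
    have key := Convex.norm_image_sub_le_of_norm_hasDerivWithin_le
      (f := g) (f' := fun z => f' z - f' x) (s := Set.uIcc x y)
      (fun z _ => (hg' z).hasDerivWithinAt)
      (fun z hz => by
        calc ‖f' z - f' x‖ ≤ B * |z - x| := hlip x z
          _ ≤ B * |y - x| :=
            mul_le_mul_of_nonneg_left (Set.abs_sub_left_of_mem_uIcc hz) hB0)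
      (convex_uIcc x y) (Set.left_mem_uIcc) (Set.right_mem_uIcc)
    have hgx : g x = 0 := by simp [hg]
    have : ‖g y‖ ≤ B * |y - x| * ‖y - x‖ := by simpa [hgx] using key
    calc ‖f y - f x - (y - x) • f' x‖ = ‖g y‖ := rfl
      _ ≤ B * |y - x| * ‖y - x‖ := this
      _ = B * (y - x) ^ 2 := by
        rw [Real.norm_eq_abs, mul_assoc, ← abs_mul, abs_mul_self]; ring
  refine ⟨⟨Cf, fun k => by rw [hσ]; exact hCf _⟩, ⟨A + 2 * B, fun m => ?_⟩⟩
  rcases Nat.eq_zero_or_pos m with hm | hm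
  · subst hm; simp; positivity
  -- m ≥ 1
  set a := Real.sqrt m with ha
  set b := Real.sqrt (m + 1) with hb
  set c := Real.sqrt (m + 2) with hc
  have hm1 : (1 : ℝ) ≤ (m : ℝ) := by exact_mod_cast hm
  have ha2 : a ^ 2 = (m : ℝ) := Real.sq_sqrt (by linarith)
  have hb2 : b ^ 2 = (m : ℝ) + 1 := by
    rw [hb]; push_cast; exact Real.sq_sqrt (by linarith)
  have hc2 : c ^ 2 = (m : ℝ) + 2 := by
    rw [hc]; push_cast; exact Real.sq_sqrt (by linarith)
  have ha1 : 1 ≤ a := by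
    rw [ha, show (1:ℝ) = Real.sqrt 1 by simp]
    exact Real.sqrt_le_sqrt (by linarith)
  have hab : a ≤ b := Real.sqrt_le_sqrt (by push_cast; linarith)
  have hbc : b ≤ c := Real.sqrt_le_sqrt (by push_cast; linarith)
  -- decompose the second difference
  have hdecomp : σ (m + 2) - 2 * σ (m + 1) + σ m
      = (f c - f b - (c - b) • f' b) + (f a - f b - (a - b) • f' b)
        + (a + c - 2 * b) • f' b := by
    have e2 : σ (m + 2) = f c := by rw [hσ]; congr 2; push_cast; ring
    have e1 : σ (m + 1) = f b := by rw [hσ]; congr 2; push_cast; ring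
    have e0 : σ m = f a := by rw [hσ]
    rw [e2, e1, e0]
    simp only [Complex.real_smul]
    push_cast
    ring
  have h1 := taylor b c
  have h2 := taylor b a
  have hfb' : ‖f' b‖ ≤ A + B * b := by
    have := hf'bound b
    rwa [abs_of_nonneg (by linarith)] at this
  -- concavity: a + c ≤ 2 b
  have hconc : a + c ≤ 2 * b := by
    have hpos : (0:ℝ) < a + c + 2 * b := by linarith
    nlinarith [sq_nonneg (a - c), hpos]
  have hnorm : ‖σ (m + 2) - 2 * σ (m + 1) + σ m‖
      ≤ B * (c - b) ^ 2 + B * (a - b) ^ 2 + (2 * b - a - c) * (A + B * b) := by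
    rw [hdecomp]
    calc ‖(f c - f b - (c - b) • f' b) + (f a - f b - (a - b) • f' b)
          + (a + c - 2 * b) • f' b‖
        ≤ ‖f c - f b - (c - b) • f' b‖ + ‖f a - f b - (a - b) • f' b‖
          + ‖(a + c - 2 * b) • f' b‖ := norm_add₃_le
      _ ≤ B * (c - b) ^ 2 + B * (a - b) ^ 2 + (2 * b - a - c) * (A + B * b) := by
          have h3 : ‖(a + c - 2 * b) • f' b‖ = |a + c - 2 * b| * ‖f' b‖ := by
            rw [norm_smul, Real.norm_eq_abs]
          rw [h3, abs_of_nonpos (by linarith)]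
          have h4 : -(a + c - 2 * b) * ‖f' b‖ ≤ (2 * b - a - c) * (A + B * b) := by
            have : (0:ℝ) ≤ 2 * b - a - c := by linarith
            calc -(a + c - 2 * b) * ‖f' b‖ = (2 * b - a - c) * ‖f' b‖ := by ring
              _ ≤ (2 * b - a - c) * (A + B * b) :=
                mul_le_mul_of_nonneg_left hfb' this
          have h1' : ‖f c - f b - (c - b) • f' b‖ ≤ B * (c - b) ^ 2 := h1
          have h2' : ‖f a - f b - (a - b) • f' b‖ ≤ B * (a - b) ^ 2 := h2
          linarith
  -- key numeric bounds
  have hbcprod : (c - b) * (c + b) = 1 := by linear_combination hc2 - hb2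
  have habprod : (b - a) * (a + b) = 1 := by linear_combination hb2 - ha2
  have hacprod : (c - a) * (c + a) = 2 := by linear_combination hc2 - ha2
  have hcb : c - b ≤ 1 / (2 * a) := by
    rw [le_div_iff₀ (by linarith : (0:ℝ) < 2 * a)]
    calc (c - b) * (2 * a) ≤ (c - b) * (c + b) :=
          mul_le_mul_of_nonneg_left (by linarith) (by linarith)
      _ = 1 := hbcprod
  have hba : b - a ≤ 1 / (2 * a) := by
    rw [le_div_iff₀ (by linarith : (0:ℝ) < 2 * a)]
    calc (b - a) * (2 * a) ≤ (b - a) * (a + b) :=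
          mul_le_mul_of_nonneg_left (by linarith) (by linarith)
      _ = 1 := habprod
  have hkey : (m : ℝ) * (2 * b - a - c) * (A + B * b) ≤ A / 4 + B / 2 := by
    have hca' : a * (c - a) ≤ 1 := by
      have : (c - a) * (2 * a) ≤ (c - a) * (c + a) :=
        mul_le_mul_of_nonneg_left (by linarith) (by linarith)
      rw [hacprod] at this
      linarith [this]
    have hb2a : b ≤ 2 * a := by
      show Real.sqrt ((m:ℕ) + 1) ≤ 2 * Real.sqrt m
      have h4 : Real.sqrt (((m:ℕ):ℝ) + 1) ≤ Real.sqrt (4 * m) :=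
        Real.sqrt_le_sqrt (by push_cast; linarith)
      rwa [show (4:ℝ) * (m:ℕ) = (2 * Real.sqrt (m:ℕ)) ^ 2 from by
        rw [mul_pow, Real.sq_sqrt (by positivity : (0:ℝ) ≤ ((m:ℕ):ℝ))]; ring,
        Real.sqrt_sq (by positivity)] at h4
    have hid : (2 * b - a - c) * ((a + b) * (b + c)) = c - a := by
      linear_combination (b + c) * habprod - (a + b) * hbcprod
    have hbd : 2 * b - a - c ≤ 1 / (4 * a ^ 3) := by
      rw [le_div_iff₀ (by positivity)]
      have h5 : (0:ℝ) ≤ 2 * b - a - c := by linarith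
      have h6 : 2 * a * (2 * a) ≤ (a + b) * (b + c) :=
        mul_le_mul (by linarith) (by linarith) (by linarith) (by linarith)
      have h7 : (2 * b - a - c) * (2 * a * (2 * a)) ≤ (2 * b - a - c) * ((a + b) * (b + c)) :=
        mul_le_mul_of_nonneg_left h6 h5
      have h8 : a * ((2 * b - a - c) * (2 * a * (2 * a)))
          ≤ a * ((2 * b - a - c) * ((a + b) * (b + c))) :=
        mul_le_mul_of_nonneg_left h7 (by linarith)
      have h9 : a * ((2 * b - a - c) * ((a + b) * (b + c))) = a * (c - a) := by rw [hid]
      rw [h9] at h8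
      calc (2 * b - a - c) * (4 * a ^ 3)
          = a * ((2 * b - a - c) * (2 * a * (2 * a))) := by ring
        _ ≤ a * (c - a) := h8
        _ ≤ 1 := hca'
    have hfb0 : (0:ℝ) ≤ A + B * b := by positivity
    have step : (m : ℝ) * (2 * b - a - c) ≤ 1 / (4 * a) := by
      rw [← ha2]
      calc a ^ 2 * (2 * b - a - c) ≤ a ^ 2 * (1 / (4 * a ^ 3)) :=
        mul_le_mul_of_nonneg_left hbd (by positivity)
        _ = 1 / (4 * a) := by field_simp
    calc (m : ℝ) * (2 * b - a - c) * (A + B * b)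
        ≤ 1 / (4 * a) * (A + B * b) := by
          apply mul_le_mul_of_nonneg_right step hfb0
      _ ≤ A / 4 + B / 2 := by
          rw [div_mul_eq_mul_div, div_le_iff₀ (by positivity : (0:ℝ) < 4 * a)]
          nlinarith [mul_nonneg hB0 (by linarith : (0:ℝ) ≤ 2 * a - b),
            mul_nonneg hA0 (by linarith : (0:ℝ) ≤ a - 1)]
  have hq1 : (m : ℝ) * (B * (c - b) ^ 2) ≤ B / 4 := by
    rw [← ha2]
    have : (c - b) ^ 2 ≤ (1 / (2 * a)) ^ 2 := by
      apply sq_le_sq'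
      · have h0 : (0:ℝ) < 1 / (2 * a) := by positivity
        linarith
      · exact hcb
    calc a ^ 2 * (B * (c - b) ^ 2) ≤ a ^ 2 * (B * (1 / (2 * a)) ^ 2) := by
          apply mul_le_mul_of_nonneg_left (mul_le_mul_of_nonneg_left this hB0) (by positivity)
      _ = B / 4 := by field_simp; ring
  have hq2 : (m : ℝ) * (B * (a - b) ^ 2) ≤ B / 4 := by
    rw [← ha2]
    have : (a - b) ^ 2 ≤ (1 / (2 * a)) ^ 2 := by
      apply sq_le_sq'
      · have h0 : (0:ℝ) < 1 / (2 * a) := by positivity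
        linarith
      · linarith
    calc a ^ 2 * (B * (a - b) ^ 2) ≤ a ^ 2 * (B * (1 / (2 * a)) ^ 2) := by
          apply mul_le_mul_of_nonneg_left (mul_le_mul_of_nonneg_left this hB0) (by positivity)
      _ = B / 4 := by field_simp; ring
  have hm0 : (0:ℝ) ≤ (m:ℝ) := by linarith
  calc (m : ℝ) * ‖σ (m + 2) - 2 * σ (m + 1) + σ m‖
      ≤ (m : ℝ) * (B * (c - b) ^ 2 + B * (a - b) ^ 2 + (2 * b - a - c) * (A + B * b)) :=
        mul_le_mul_of_nonneg_left hnorm hm0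
    _ = (m : ℝ) * (B * (c - b) ^ 2) + (m : ℝ) * (B * (a - b) ^ 2)
        + (m : ℝ) * (2 * b - a - c) * (A + B * b) := by ring
    _ ≤ B / 4 + B / 4 + (A / 4 + B / 2) := by linarith
    _ ≤ A + 2 * B := by linarith
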